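/- Lemma (Case 2 of the proof of the paper's Claim 3.5). Let r be an order with levels on X, let (τ₀, ω₀) be a persistence pair of r, let ε > 0, and let ω̃ be an n-simplex with ω̃ ∈ OV(r, ω₀) and ω̃ ∉ SV_ε(r, τ₀, ω₀). Let τ̃ ∈ X^(n−1) satisfy τ₀ ≺_r τ̃, r̂(τ₀) ≤ r̂(τ̃) < r̂(τ₀) + ε, ω̃ ∉ K_V(G(≻_r τ̃), ω₀), and ω̃ ∈ K_V(G(⪰_r τ̃), ω₀). Denote by ω_e the n-cell having τ₀ as a face that lies in K_V(G(≻_r τ₀), ω₀), by ω_e′ the other n-cell having τ₀ as a face, and by ω₁ the ≼_r-maximum n-cell of K_V(G(≻_r τ₀), ω_e′). Suppose there exists a path T in G(≻_r τ₀) from an n-cell of K_V(G(≻_r τ̃), ω̃) to ω_e none of whose vertices lies in K_V(G(≻_r τ̃), ω₀). Set η := (r̂(τ̃) − r̂(τ₀) + ε)/4, let A ⊆ X^(n−1) be the union of the set of edges of the connected component of ω̃ in G(≻_r τ̃), the set of edges of T, the singleton {τ₀}, and the set of edges of the connected component of ω₁ in G(≻_r τ₀), and let s = q(r, η, A). Then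 s ∈ R_ε, (τ̃, ω₀) is a persistence pair of s (i.e., τ_{s,ω₀} = τ̃), and ω̃ ∉ OV(s, ω₀). -/

import Mathlib

open scoped Classical

namespace StableVol

/-- A finite abstract simplicial complex of dimension `n`: a finite family of nonempty
finite subsets of the vertex set, closed under nonempty subsets, in which every element
is contained in an element of cardinality `n+1`. -/
structure NComplex (V : Type*) [DecidableEq V] (n : ℕ) where
  X : Finset (Finset V)
  nonempty_mem : ∀ σ ∈ X, σ.Nonempty
  down_closed : ∀ σ ∈ X, ∀ σ' : Finset V, σ' ⊆ σ → σ'.Nonempty → σ' ∈ X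
  contained_top : ∀ σ ∈ X, ∃ ω ∈ X, σ ⊆ ω ∧ ω.card = n + 1

variable {V : Type*} [DecidableEq V] {n : ℕ}

/-- An `n`-cell is either an `n`-simplex (`some ω`) or the formal cell `ω∞` (`none`). -/
abbrev Cell (V : Type*) := Option (Finset V)

/-- `τ` is a face of the cell `c`.  For `c = some ω` this means that `ω` is an
`n`-simplex of `X` containing `τ`; the faces of `ω∞ = none` are the `(n-1)`-simplices
having exactly one `n`-simplex coface. -/
def faceCell (C : NComplex V n) (τ : Finset V) : Cell V → Prop
  | some ω => ω ∈ C.X ∧ ω.card = n + 1 ∧ τ ⊆ ω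
  | none => {ω | ω ∈ C.X ∧ ω.card = n + 1 ∧ τ ⊆ ω}.ncard = 1

def IsCell (C : NComplex V n) : Cell V → Prop
  | some ω => ω ∈ C.X ∧ ω.card = n + 1
  | none => True

/-- Adjacency in the dual graph, restricted to the edge set `E ⊆ X^(n-1)`. -/
def adj (C : NComplex V n) (E : Set (Finset V)) (c c' : Cell V) : Prop :=
  ∃ τ ∈ E, faceCell C τ c ∧ faceCell C τ c' ∧ c ≠ c'

/-- `KV C E c₀`: the set of `n`-cells in the connected component of `c₀` in the
subgraph of the dual graph with edge set `E`. -/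
def KV (C : NComplex V n) (E : Set (Finset V)) (c₀ : Cell V) : Set (Cell V) :=
  {c | Relation.ReflTransGen (adj C E) c₀ c}

/-- Every `(n-1)`-simplex of `X` is a face of exactly two `n`-cells. -/
def TwoCofaces (C : NComplex V n) : Prop :=
  ∀ τ ∈ C.X, τ.card = n →
    ∃ c₁ c₂ : Cell V, c₁ ≠ c₂ ∧ ∀ c : Cell V, faceCell C τ c ↔ (c = c₁ ∨ c = c₂)

/-- The dual graph (with full edge set `X^(n-1)`) is connected. -/
def DualConn (C : NComplex V n) : Prop :=
  ∀ c c' : Cell V, IsCell C c → IsCell C c' →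
    c' ∈ KV C {τ | τ ∈ C.X ∧ τ.card = n} c

/-- A level function: monotone with respect to strict inclusion of simplices. -/
def IsLevelFun (C : NComplex V n) (lev : Finset V → ℝ) : Prop :=
  ∀ σ ∈ C.X, ∀ σ' ∈ C.X, σ ⊂ σ' → lev σ ≤ lev σ'

/-- `(lev, slt)` is an order with levels on `X`: `lev` is a level function and `slt`
is (the strict form of) a linear order on `X` refining both `lev` and strict
inclusion. -/
def IsOWL (C : NComplex V n) (lev : Finset V → ℝ)
    (slt : Finset V → Finset V → Prop) : Prop :=
  IsLevelFun C lev ∧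
  (∀ σ ∈ C.X, ¬ slt σ σ) ∧
  (∀ σ ∈ C.X, ∀ σ' ∈ C.X, ∀ σ'' ∈ C.X, slt σ σ' → slt σ' σ'' → slt σ σ'') ∧
  (∀ σ ∈ C.X, ∀ σ' ∈ C.X, σ ≠ σ' → slt σ σ' ∨ slt σ' σ) ∧
  (∀ σ ∈ C.X, ∀ σ' ∈ C.X, slt σ σ' → lev σ ≤ lev σ') ∧
  (∀ σ ∈ C.X, ∀ σ' ∈ C.X, σ ⊂ σ' → slt σ σ')

/-- Extension of a strict order on simplices to `n`-cells, `ω∞ = none` being the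
unique maximum. -/
def cslt (slt : Finset V → Finset V → Prop) : Cell V → Cell V → Prop
  | some σ, some σ' => slt σ σ'
  | some _, none => True
  | none, _ => False

/-- `m` is the maximum cell of the set `S` with respect to the order `slt`. -/
def IsMaxCell (slt : Finset V → Finset V → Prop) (S : Set (Cell V)) (m : Cell V) :
    Prop :=
  m ∈ S ∧ ∀ c ∈ S, c ≠ m → cslt slt c m

/-- Edge set of `G(≻ σ₀)`: the `(n-1)`-simplices strictly above `σ₀`. -/
def Egt (C : NComplex V n) (slt : Finset V → Finset V → Prop) (σ₀ : Finset V) :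
    Set (Finset V) :=
  {τ | τ ∈ C.X ∧ τ.card = n ∧ slt σ₀ τ}

/-- Edge set of `G(⪰ σ₀)`. -/
def Ege (C : NComplex V n) (slt : Finset V → Finset V → Prop) (σ₀ : Finset V) :
    Set (Finset V) :=
  {τ | τ ∈ C.X ∧ τ.card = n ∧ (τ = σ₀ ∨ slt σ₀ τ)}

/-- Edge set of `G(lev ≥ s)`. -/
def Elev (C : NComplex V n) (lev : Finset V → ℝ) (s : ℝ) : Set (Finset V) :=
  {τ | τ ∈ C.X ∧ τ.card = n ∧ s ≤ lev τ}

/-- `(τ₀, ω₀)` is a persistence pair of the order `slt`: the two `n`-cells having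
`τ₀` as a face lie in distinct connected components of `G(≻ τ₀)`, and `ω₀` is the
smaller of the two maximum cells of these two components. -/
def IsPersPair (C : NComplex V n) (slt : Finset V → Finset V → Prop)
    (τ₀ ω₀ : Finset V) : Prop :=
  τ₀ ∈ C.X ∧ τ₀.card = n ∧ ω₀ ∈ C.X ∧ ω₀.card = n + 1 ∧
  ∃ c₁ c₂ : Cell V, c₁ ≠ c₂ ∧ faceCell C τ₀ c₁ ∧ faceCell C τ₀ c₂ ∧
    c₂ ∉ KV C (Egt C slt τ₀) c₁ ∧
    ∃ m₂ : Cell V,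
      IsMaxCell slt (KV C (Egt C slt τ₀) c₁) (some ω₀) ∧
      IsMaxCell slt (KV C (Egt C slt τ₀) c₂) m₂ ∧
      cslt slt (some ω₀) m₂

/-- The optimal volume `OV(q, ω₀) = K_V(G(≻_q τ_{q,ω₀}), ω₀)`. -/
def OV (C : NComplex V n) (slt : Finset V → Finset V → Prop) (ω₀ : Finset V) :
    Set (Cell V) :=
  {c | ∃ τ, IsPersPair C slt τ ω₀ ∧ c ∈ KV C (Egt C slt τ) (some ω₀)}

/-- The stable volume `SV_ε(r, τ₀, ω₀) = K_V(G(r̂ ≥ r̂(τ₀) + ε), ω₀)`. -/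
def SV (C : NComplex V n) (lev : Finset V → ℝ) (τ₀ ω₀ : Finset V) (ε : ℝ) :
    Set (Cell V) :=
  KV C (Elev C lev (lev τ₀ + ε)) (some ω₀)

/-- `(qlev, qslt) ∈ R_ε`: an order with levels uniformly `ε/2`-close to `rlev`
satisfying the `(r, ω₀)`-order condition. -/
def InR (C : NComplex V n) (rlev : Finset V → ℝ)
    (rslt : Finset V → Finset V → Prop) (ω₀ : Finset V) (ε : ℝ)
    (qlev : Finset V → ℝ) (qslt : Finset V → Finset V → Prop) : Prop :=
  IsOWL C qlev qslt ∧ (∀ σ ∈ C.X, |qlev σ - rlev σ| < ε / 2) ∧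
  (∀ σ ∈ C.X, rslt σ ω₀ → qslt σ ω₀)

/-- `F_{ε,n}`: the `n`-simplices with level at least `lev τ₀ + ε` that precede `ω₀`. -/
def Fcells (C : NComplex V n) (lev : Finset V → ℝ)
    (slt : Finset V → Finset V → Prop) (τ₀ ω₀ : Finset V) (ε : ℝ) :
    Set (Finset V) :=
  {σ | σ ∈ C.X ∧ σ.card = n + 1 ∧ lev τ₀ + ε ≤ lev σ ∧ slt σ ω₀}

/-- `F_{ε,n-1}`: the `(n-1)`-simplices with level at least `lev τ₀ + ε` that
precede `ω₀`. -/
def Fedges (C : NComplex V n) (lev : Finset V → ℝ)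
    (slt : Finset V → Finset V → Prop) (τ₀ ω₀ : Finset V) (ε : ℝ) :
    Set (Finset V) :=
  {σ | σ ∈ C.X ∧ σ.card = n ∧ lev τ₀ + ε ≤ lev σ ∧ slt σ ω₀}

/-- `τ*(∂z)`: the `ℤ/2ℤ`-sum of the coefficients of `z` over the `n`-simplex
cofaces of `τ`. -/
def bsum (C : NComplex V n) (τ : Finset V) (z : Finset V → ZMod 2) : ZMod 2 :=
  ∑ ω ∈ C.X.filter (fun ω => ω.card = n + 1 ∧ τ ⊆ ω), z ω

/-- A feasible chain `z = ω₀ + Σ_{ω ∈ F_{ε,n}} α_ω ω` with `τ*(∂z) = 0` for all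
`τ ∈ F_{ε,n-1}`. -/
def IsFeasible (C : NComplex V n) (lev : Finset V → ℝ)
    (slt : Finset V → Finset V → Prop) (τ₀ ω₀ : Finset V) (ε : ℝ)
    (z : Finset V → ZMod 2) : Prop :=
  z ω₀ = 1 ∧
  (∀ ω : Finset V, ω ≠ ω₀ → ω ∉ Fcells C lev slt τ₀ ω₀ ε → z ω = 0) ∧
  (∀ τ ∈ Fedges C lev slt τ₀ ω₀ ε, bsum C τ z = 0)

/-- `‖z‖₀`: the number of simplices of `X` with nonzero coefficient in `z`. -/
def norm0 (C : NComplex V n) (z : Finset V → ZMod 2) : ℕ :=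
  (C.X.filter fun ω => z ω ≠ 0).card

/-- The level function of the perturbed order `q(r, η, A)`. -/
noncomputable def pertLev (C : NComplex V n) (rlev : Finset V → ℝ) (η : ℝ)
    (A : Set (Finset V)) : Finset V → ℝ :=
  fun σ => if (σ ∈ C.X ∧ σ.card = n + 1) ∨ σ ∈ A then rlev σ + η else rlev σ - η

/-- The strict order of the perturbed order `q(r, η, A)`. -/
def pertSlt (C : NComplex V n) (rlev : Finset V → ℝ)
    (rslt : Finset V → Finset V → Prop) (η : ℝ) (A : Set (Finset V)) :
    Finset V → Finset V → Prop :=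
  fun σ σ' => pertLev C rlev η A σ < pertLev C rlev η A σ' ∨
    (pertLev C rlev η A σ = pertLev C rlev η A σ' ∧ rslt σ σ')

/-- The `(n-1)`-simplices that are edges of the connected component of `c₀` in the
subgraph with edge set `E`. -/
def compEdges (C : NComplex V n) (E : Set (Finset V)) (c₀ : Cell V) :
    Set (Finset V) :=
  {τ | τ ∈ E ∧ ∃ c, faceCell C τ c ∧ c ∈ KV C E c₀}

/-- `IsPath C E c c' vs es`: `vs` is the vertex list and `es` the edge list of a walk
from `c` to `c'` in the subgraph of the dual graph with edge set `E`. -/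
inductive IsPath (C : NComplex V n) (E : Set (Finset V)) :
    Cell V → Cell V → List (Cell V) → List (Finset V) → Prop
  | nil (c : Cell V) : IsPath C E c c [c] []
  | cons {c c' c'' : Cell V} {vs : List (Cell V)} {es : List (Finset V)}
      {τ : Finset V} : τ ∈ E → faceCell C τ c → faceCell C τ c' → c ≠ c' →
      IsPath C E c' c'' vs es → IsPath C E c c'' (c :: vs) (τ :: es)



section Lemmas

variable {C : NComplex V n} {E E' : Set (Finset V)}

lemma adj_symm {c c' : Cell V} (h : adj C E c c') : adj C E c' c := by
  obtain ⟨τ, hτ, h1, h2, h3⟩ := h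
  exact ⟨τ, hτ, h2, h1, h3.symm⟩

lemma KV_refl (c₀ : Cell V) : c₀ ∈ KV C E c₀ := Relation.ReflTransGen.refl

lemma mem_KV_symm {c c' : Cell V} (h : c' ∈ KV C E c) : c ∈ KV C E c' := by
  unfold KV at *
  induction h with
  | refl => exact Relation.ReflTransGen.refl
  | tail _ hadj ih => exact Relation.ReflTransGen.head (adj_symm hadj) ih

lemma mem_KV_trans {a b c : Cell V} (h : b ∈ KV C E a) (h' : c ∈ KV C E b) :
    c ∈ KV C E a := Relation.ReflTransGen.trans h h'

lemma KV_congr {c c' : Cell V} (h : c' ∈ KV C E c) : KV C E c' = KV C E c := by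
  ext x
  exact ⟨fun hx => mem_KV_trans h hx, fun hx => mem_KV_trans (mem_KV_symm h) hx⟩

lemma KV_mono (hE : E ⊆ E') {c₀ : Cell V} : KV C E c₀ ⊆ KV C E' c₀ := by
  intro c hc
  unfold KV at *
  induction hc with
  | refl => exact Relation.ReflTransGen.refl
  | tail _ hadj ih =>
      refine Relation.ReflTransGen.tail ih ?_
      obtain ⟨τ, hτ, h1, h2, h3⟩ := hadj
      exact ⟨τ, hE hτ, h1, h2, h3⟩

/-- Closure principle: a set containing `c₀` and closed under adjacency contains the
component. -/
lemma KV_subset_of_closed {S : Set (Cell V)} {c₀ : Cell V} (h₀ : c₀ ∈ S)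
    (hcl : ∀ c ∈ S, ∀ c', adj C E c c' → c' ∈ S) : KV C E c₀ ⊆ S := by
  intro c hc
  unfold KV at hc
  induction hc with
  | refl => exact h₀
  | tail h hadj ih => exact hcl _ ih _ hadj

lemma isCell_of_faceCell {τ : Finset V} {c : Cell V} (h : faceCell C τ c) :
    IsCell C c := by
  cases c with
  | none => trivial
  | some ω => exact ⟨h.1, h.2.1⟩

lemma isCell_of_mem_KV {c₀ c : Cell V} (h₀ : IsCell C c₀) (h : c ∈ KV C E c₀) :
    IsCell C c := by
  unfold KV at h
  induction h with
  | refl => exact h₀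
  | tail _ hadj _ =>
      obtain ⟨τ, _, _, h2, _⟩ := hadj
      exact isCell_of_faceCell h2

lemma KV_finite (c₀ : Cell V) : (KV C E c₀).Finite := by
  have : KV C E c₀ ⊆ insert c₀ (insert none (Option.some '' (C.X : Set (Finset V)))) := by
    intro c hc
    unfold KV at hc
    induction hc with
    | refl => exact Set.mem_insert _ _
    | @tail b c' _ hadj _ =>
        obtain ⟨τ, _, _, h2, _⟩ := hadj
        cases c' with
        | none => exact Set.mem_insert_of_mem _ (Set.mem_insert _ _)
        | some ω =>
            exact Set.mem_insert_of_mem _ (Set.mem_insert_of_mem _ ⟨ω, h2.1, rfl⟩)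
  exact Set.Finite.subset (by
    refine Set.Finite.insert _ (Set.Finite.insert _ ?_)
    exact (C.X.finite_toSet).image _) this

end Lemmas

section OrderLemmas

variable {C : NComplex V n} {qlev : Finset V → ℝ} {qslt : Finset V → Finset V → Prop}

lemma slt_asymm (hq : IsOWL C qlev qslt) {σ σ' : Finset V} (hσ : σ ∈ C.X)
    (hσ' : σ' ∈ C.X) (h : qslt σ σ') (h' : qslt σ' σ) : False :=
  hq.2.1 σ hσ (hq.2.2.1 σ hσ σ' hσ' σ hσ h h')

lemma cslt_trans (hq : IsOWL C qlev qslt) {a b c : Cell V} (ha : IsCell C a)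
    (hb : IsCell C b) (hc : IsCell C c) (h1 : cslt qslt a b) (h2 : cslt qslt b c) :
    cslt qslt a c := by
  cases a with
  | none => exact absurd h1 (by simp [cslt])
  | some x =>
    cases b with
    | none => exact absurd h2 (by simp [cslt])
    | some y =>
      cases c with
      | none => trivial
      | some z => exact hq.2.2.1 x ha.1 y hb.1 z hc.1 h1 h2

lemma cslt_asymm (hq : IsOWL C qlev qslt) {a b : Cell V} (ha : IsCell C a)
    (hb : IsCell C b) (h1 : cslt qslt a b) (h2 : cslt qslt b a) : False := by
  cases a with
  | none => exact h1
  | some x =>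
    cases b with
    | none => exact h2
    | some y => exact slt_asymm hq ha.1 hb.1 h1 h2

lemma cslt_total (hq : IsOWL C qlev qslt) {a b : Cell V} (ha : IsCell C a)
    (hb : IsCell C b) (hne : a ≠ b) : cslt qslt a b ∨ cslt qslt b a := by
  cases a with
  | none =>
    cases b with
    | none => exact absurd rfl hne
    | some y => exact Or.inr trivial
  | some x =>
    cases b with
    | none => exact Or.inl trivial
    | some y =>
      exact hq.2.2.2.1 x ha.1 y hb.1 (by simpa using hne)

lemma exists_maxCell_finset (hq : IsOWL C qlev qslt) (t : Finset (Cell V)) :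
    t.Nonempty → (∀ c ∈ t, IsCell C c) → ∃ m, IsMaxCell qslt (↑t) m := by
  induction t using Finset.induction_on with
  | empty => rintro ⟨x, hx⟩; simp at hx
  | @insert a s ha ih =>
    intro _ hcell
    rcases s.eq_empty_or_nonempty with rfl | hs
    · refine ⟨a, by simp, ?_⟩
      intro c hc hne
      simp at hc
      exact absurd hc hne
    · obtain ⟨m, hmS, hmax⟩ := ih hs (fun c hc => hcell c (Finset.mem_insert_of_mem hc))
      have hmS' : m ∈ s := by simpa using hmS
      have ham : a ≠ m := fun h => ha (h ▸ hmS')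
      have hacell : IsCell C a := hcell a (Finset.mem_insert_self a s)
      have hmcell : IsCell C m := hcell m (Finset.mem_insert_of_mem hmS')
      rcases cslt_total hq hacell hmcell ham with h | h
      · refine ⟨m, by simp [hmS'], ?_⟩
        intro c hc hne
        simp only [Finset.coe_insert, Set.mem_insert_iff] at hc
        rcases hc with rfl | hc
        · exact h
        · exact hmax c (by simpa using hc) hne
      · refine ⟨a, by simp, ?_⟩
        intro c hc hne
        simp only [Finset.coe_insert, Set.mem_insert_iff] at hc
        rcases hc with rfl | hc
        · exact absurd rfl hne
        · rcases eq_or_ne c m with rfl | hcm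
          · exact h
          · exact cslt_trans hq (hcell c (Finset.mem_insert_of_mem hc)) hmcell hacell
              (hmax c (by simpa using hc) hcm) h

lemma exists_maxCell (hq : IsOWL C qlev qslt) {S : Set (Cell V)} (hfin : S.Finite)
    (hne : S.Nonempty) (hcell : ∀ c ∈ S, IsCell C c) :
    ∃ m, IsMaxCell qslt S m := by
  obtain ⟨m, hm⟩ := exists_maxCell_finset hq hfin.toFinset
    (by simpa [Set.Finite.toFinset] using hne)
    (fun c hc => hcell c (hfin.mem_toFinset.1 hc))
  rw [hfin.coe_toFinset] at hm
  exact ⟨m, hm⟩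

lemma maxCell_unique (hq : IsOWL C qlev qslt) {S : Set (Cell V)} {m m' : Cell V}
    (hcell : ∀ c ∈ S, IsCell C c) (h : IsMaxCell qslt S m) (h' : IsMaxCell qslt S m') :
    m = m' := by
  by_contra hne
  exact cslt_asymm hq (hcell m h.1) (hcell m' h'.1)
    (h'.2 m h.1 hne) (h.2 m' h'.1 (Ne.symm hne))

lemma Egt_subset (hq : IsOWL C qlev qslt) {σ σ' : Finset V} (hσ : σ ∈ C.X)
    (hσ' : σ' ∈ C.X) (h : qslt σ σ') : Egt C qslt σ' ⊆ Egt C qslt σ := by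
  rintro τ ⟨hτX, hτc, hlt⟩
  exact ⟨hτX, hτc, hq.2.2.1 σ hσ σ' hσ' τ hτX h hlt⟩

lemma persPair_unique_aux (hq : IsOWL C qlev qslt) {τ τ' ω₀ : Finset V}
    (h : IsPersPair C qslt τ ω₀) (h' : IsPersPair C qslt τ' ω₀)
    (hlt : qslt τ τ') : False := by
  obtain ⟨hτX, hτc, hωX, hωc, c₁, c₂, hne12, hf1, hf2, hsep, m₂, hmax1, hmax2, hlt2⟩ := h
  obtain ⟨hτX', hτc', _, _, c₁', c₂', hne12', hf1', hf2', hsep', m₂', hmax1', hmax2', hlt2'⟩ := h'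
  have hEsub : Egt C qslt τ' ⊆ Egt C qslt τ := Egt_subset hq hτX hτX' hlt
  have hc₁cell : IsCell C c₁ := isCell_of_faceCell hf1
  have hcomp : ∀ c ∈ KV C (Egt C qslt τ) c₁, IsCell C c :=
    fun c hc => isCell_of_mem_KV hc₁cell hc
  -- ω₀ is in the component of c₁
  have hω₀mem : (some ω₀ : Cell V) ∈ KV C (Egt C qslt τ) c₁ := hmax1.1
  have hKVeq : KV C (Egt C qslt τ) (some ω₀) = KV C (Egt C qslt τ) c₁ := KV_congr hω₀mem
  -- c₁' is in the component of c₁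
  have hc₁' : c₁' ∈ KV C (Egt C qslt τ) c₁ := by
    rw [← hKVeq]
    exact mem_KV_symm (KV_mono hEsub hmax1'.1)
  -- c₂' is adjacent to c₁' via τ'
  have hτ'E : τ' ∈ Egt C qslt τ := ⟨hτX', hτc', hlt⟩
  have hc₂' : c₂' ∈ KV C (Egt C qslt τ) c₁ :=
    mem_KV_trans hc₁' (Relation.ReflTransGen.single ⟨τ', hτ'E, hf1', hf2', hne12'⟩)
  -- m₂' is in the component of c₁
  have hm₂' : m₂' ∈ KV C (Egt C qslt τ) c₁ :=
    mem_KV_trans hc₂' (KV_mono hEsub hmax2'.1)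
  -- contradiction with maximality of ω₀
  cases m₂' with
  | none =>
    exact hmax1.2 none (hKVeq ▸ hm₂' : _) (by simp)
  | some w =>
    have hwcell : IsCell C (some w) := hcomp _ hm₂'
    have hne : (some w : Cell V) ≠ some ω₀ := by
      intro h
      rw [h] at hlt2'
      exact hq.2.1 ω₀ hωX hlt2'
    exact slt_asymm hq hwcell.1 hωX (hmax1.2 (some w) hm₂' hne) hlt2'

lemma persPair_unique (hq : IsOWL C qlev qslt) {τ τ' ω₀ : Finset V}
    (h : IsPersPair C qslt τ ω₀) (h' : IsPersPair C qslt τ' ω₀) : τ = τ' := by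
  by_contra hne
  rcases hq.2.2.2.1 τ h.1 τ' h'.1 hne with hlt | hlt
  · exact persPair_unique_aux hq h h' hlt
  · exact persPair_unique_aux hq h' h hlt

end OrderLemmas

section PathLemmas

variable {C : NComplex V n} {E E' : Set (Finset V)}

lemma IsPath.start_mem {c c' : Cell V} {vs : List (Cell V)} {es : List (Finset V)}
    (h : IsPath C E c c' vs es) : c ∈ vs := by
  cases h with
  | nil => exact List.mem_singleton_self _
  | cons _ _ _ _ _ => exact List.mem_cons_self

lemma IsPath.end_mem {c c' : Cell V} {vs : List (Cell V)} {es : List (Finset V)}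
    (h : IsPath C E c c' vs es) : c' ∈ vs := by
  induction h with
  | nil => exact List.mem_singleton_self _
  | cons _ _ _ _ _ ih => exact List.mem_cons_of_mem _ ih

lemma IsPath.toKV {c c' : Cell V} {vs : List (Cell V)} {es : List (Finset V)}
    (h : IsPath C E c c' vs es) (hE : ∀ τ ∈ es, τ ∈ E') : c' ∈ KV C E' c := by
  induction h with
  | nil => exact KV_refl _
  | @cons a b c'' vs' es' τ hτ hf1 hf2 hne _ ih =>
    refine Relation.ReflTransGen.head ⟨τ, hE τ (List.mem_cons_self), hf1, hf2, hne⟩ ?_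
    exact ih (fun τ' hτ' => hE τ' (List.mem_cons_of_mem _ hτ'))

lemma IsPath.coface_mem_vs (htwo : TwoCofaces C)
    (hE : ∀ τ ∈ E, τ ∈ C.X ∧ τ.card = n)
    {c c' : Cell V} {vs : List (Cell V)} {es : List (Finset V)}
    (h : IsPath C E c c' vs es) :
    ∀ τ ∈ es, ∀ d : Cell V, faceCell C τ d → d ∈ vs := by
  induction h with
  | nil => intro τ hτ; simp at hτ
  | @cons a b c'' vs' es' τ hτ hf1 hf2 hne hp ih =>
    intro τ' hτ' d hd
    rcases List.mem_cons.1 hτ' with rfl | hτ'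
    · obtain ⟨d₁, d₂, hd12, hfaces⟩ := htwo τ' (hE τ' hτ).1 (hE τ' hτ).2
      have h1 := (hfaces a).1 hf1
      have h2 := (hfaces b).1 hf2
      have hd' := (hfaces d).1 hd
      have : d = a ∨ d = b := by
        rcases h1 with rfl | rfl <;> rcases h2 with h2 | h2 <;>
          rcases hd' with rfl | rfl <;> tauto
      rcases this with rfl | rfl
      · exact List.mem_cons_self
      · exact List.mem_cons_of_mem _ hp.start_mem
    · exact List.mem_cons_of_mem _ (ih τ' hτ' d hd)

lemma IsPath.edges_mem {c c' : Cell V} {vs : List (Cell V)} {es : List (Finset V)}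
    (h : IsPath C E c c' vs es) : ∀ τ ∈ es, τ ∈ E := by
  induction h with
  | nil => intro τ hτ; simp at hτ
  | cons hτ _ _ _ _ ih =>
    intro τ' hτ'
    rcases List.mem_cons.1 hτ' with rfl | hτ'
    · exact hτ
    · exact ih τ' hτ'

/-- A connection inside a component can be realized using only component edges. -/
lemma mem_KV_compEdges {z x : Cell V} (hx : x ∈ KV C E z) :
    x ∈ KV C (compEdges C E z) z := by
  unfold KV at hx ⊢
  induction hx with
  | refl => exact Relation.ReflTransGen.refl
  | @tail c c' hc hadj ih =>
    obtain ⟨τ, hτ, h1, h2, h3⟩ := hadj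
    exact Relation.ReflTransGen.tail ih ⟨τ, ⟨hτ, c, h1, hc⟩, h1, h2, h3⟩

/-- Splitting lemma: adding one edge `τ` with cofaces `d₁`, `d₂`. -/
lemma KV_union_single_subset {τ : Finset V} {d₁ d₂ : Cell V}
    (hfaces : ∀ c : Cell V, faceCell C τ c ↔ (c = d₁ ∨ c = d₂)) (c₀ : Cell V) :
    KV C (E ∪ {τ}) c₀ ⊆ KV C E c₀ ∪ KV C E d₁ ∪ KV C E d₂ := by
  refine KV_subset_of_closed (Or.inl (Or.inl (KV_refl _))) ?_
  rintro c hc c' ⟨τ', hτ', h1, h2, h3⟩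
  rcases hτ' with hτ' | hτ'
  · rcases hc with (hc | hc) | hc
    · exact Or.inl (Or.inl (Relation.ReflTransGen.tail hc ⟨τ', hτ', h1, h2, h3⟩))
    · exact Or.inl (Or.inr (Relation.ReflTransGen.tail hc ⟨τ', hτ', h1, h2, h3⟩))
    · exact Or.inr (Relation.ReflTransGen.tail hc ⟨τ', hτ', h1, h2, h3⟩)
  · rcases (hfaces c').1 ((Set.mem_singleton_iff.1 hτ') ▸ h2) with rfl | rfl
    · exact Or.inl (Or.inr (KV_refl _))
    · exact Or.inr (KV_refl _)

lemma KV_union_single_eq {τ : Finset V} {d₁ d₂ : Cell V}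
    (hfaces : ∀ c : Cell V, faceCell C τ c ↔ (c = d₁ ∨ c = d₂)) {c₀ : Cell V}
    (hd₁ : d₁ ∉ KV C E c₀) (hd₂ : d₂ ∉ KV C E c₀) :
    KV C (E ∪ {τ}) c₀ ⊆ KV C E c₀ := by
  refine KV_subset_of_closed (KV_refl _) ?_
  rintro c hc c' ⟨τ', hτ', h1, h2, h3⟩
  rcases hτ' with hτ' | hτ'
  · exact Relation.ReflTransGen.tail hc ⟨τ', hτ', h1, h2, h3⟩
  · rcases (hfaces c).1 ((Set.mem_singleton_iff.1 hτ') ▸ h1) with rfl | rfl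
    · exact absurd hc hd₁
    · exact absurd hc hd₂

end PathLemmas


section PertLemmas

variable {C : NComplex V n} {rlev : Finset V → ℝ} {rslt : Finset V → Finset V → Prop}
  {η : ℝ} {A : Set (Finset V)}

lemma card_le_of_mem {σ : Finset V} (hσ : σ ∈ C.X) : σ.card ≤ n + 1 := by
  obtain ⟨ω, _, hsub, hcard⟩ := C.contained_top σ hσ
  exact hcard ▸ Finset.card_le_card hsub

lemma pertLev_top {σ : Finset V} (hσ : σ ∈ C.X) (hc : σ.card = n + 1) :
    pertLev C rlev η A σ = rlev σ + η := by
  simp [pertLev, hσ, hc]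

lemma pertLev_A {σ : Finset V} (hσ : σ ∈ A) :
    pertLev C rlev η A σ = rlev σ + η := by
  simp [pertLev, hσ]

lemma pertLev_low {σ : Finset V} (hc : σ.card ≠ n + 1) (hA : σ ∉ A) :
    pertLev C rlev η A σ = rlev σ - η := by
  unfold pertLev
  rw [if_neg]
  rintro (⟨_, h⟩ | h)
  · exact hc h
  · exact hA h

lemma pertLev_le (hη : 0 ≤ η) (σ : Finset V) : pertLev C rlev η A σ ≤ rlev σ + η := by
  unfold pertLev; split
  · exact le_refl _
  · linarith

lemma pertLev_ge (hη : 0 ≤ η) (σ : Finset V) : rlev σ - η ≤ pertLev C rlev η A σ := by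
  unfold pertLev; split
  · linarith
  · exact le_refl _

lemma pertLev_mono (hr : IsOWL C rlev rslt) (hη : 0 < η)
    (hA : ∀ τ ∈ A, τ ∈ C.X ∧ τ.card = n)
    {σ σ' : Finset V} (hσ : σ ∈ C.X) (hσ' : σ' ∈ C.X) (hss : σ ⊂ σ') :
    pertLev C rlev η A σ ≤ pertLev C rlev η A σ' := by
  have hlev : rlev σ ≤ rlev σ' := hr.1 σ hσ σ' hσ' hss
  have hcard : σ.card < σ'.card := Finset.card_lt_card hss
  have hcard' : σ'.card ≤ n + 1 := card_le_of_mem hσ'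
  by_cases hP : (σ ∈ C.X ∧ σ.card = n + 1) ∨ σ ∈ A
  · have hσn : σ.card = n := by
      rcases hP with ⟨_, h⟩ | h
      · omega
      · exact (hA σ h).2
    have hσ'c : σ'.card = n + 1 := by omega
    rw [pertLev_top hσ' hσ'c]
    calc pertLev C rlev η A σ ≤ rlev σ + η := pertLev_le hη.le σ
      _ ≤ rlev σ' + η := by linarith
  · have : pertLev C rlev η A σ = rlev σ - η := by simp [pertLev, hP]
    rw [this]
    calc rlev σ - η ≤ rlev σ' - η := by linarith
      _ ≤ pertLev C rlev η A σ' := pertLev_ge hη.le σ'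

lemma pert_isOWL (hr : IsOWL C rlev rslt) (hη : 0 < η)
    (hA : ∀ τ ∈ A, τ ∈ C.X ∧ τ.card = n) :
    IsOWL C (pertLev C rlev η A) (pertSlt C rlev rslt η A) := by
  obtain ⟨hlev, hirr, htrans, htot, hrefl, hsub⟩ := hr
  refine ⟨?_, ?_, ?_, ?_, ?_, ?_⟩
  · intro σ hσ σ' hσ' hss
    exact pertLev_mono ⟨hlev, hirr, htrans, htot, hrefl, hsub⟩ hη hA hσ hσ' hss
  · rintro σ hσ (h | ⟨_, h⟩)
    · exact lt_irrefl _ h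
    · exact hirr σ hσ h
  · rintro σ hσ σ' hσ' σ'' hσ'' (h1 | ⟨h1, h1'⟩) (h2 | ⟨h2, h2'⟩)
    · exact Or.inl (h1.trans h2)
    · exact Or.inl (h2 ▸ h1)
    · exact Or.inl (h1 ▸ h2)
    · exact Or.inr ⟨h1.trans h2, htrans σ hσ σ' hσ' σ'' hσ'' h1' h2'⟩
  · intro σ hσ σ' hσ' hne
    rcases lt_trichotomy (pertLev C rlev η A σ) (pertLev C rlev η A σ') with h | h | h
    · exact Or.inl (Or.inl h)
    · rcases htot σ hσ σ' hσ' hne with h' | h'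
      · exact Or.inl (Or.inr ⟨h, h'⟩)
      · exact Or.inr (Or.inr ⟨h.symm, h'⟩)
    · exact Or.inr (Or.inl h)
  · rintro σ hσ σ' hσ' (h | ⟨h, _⟩)
    · exact h.le
    · exact h.le
  · intro σ hσ σ' hσ' hss
    have h := pertLev_mono ⟨hlev, hirr, htrans, htot, hrefl, hsub⟩ hη hA hσ hσ' hss
    rcases h.lt_or_eq with h | h
    · exact Or.inl h
    · exact Or.inr ⟨h, hsub σ hσ σ' hσ' hss⟩

/-- If both simplices get the same offset, the perturbed order agrees with `rslt`. -/
lemma pertSlt_iff_of_offset (hr : IsOWL C rlev rslt) {σ σ' : Finset V}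
    (hσ : σ ∈ C.X) (hσ' : σ' ∈ C.X) (d : ℝ)
    (h1 : pertLev C rlev η A σ = rlev σ + d) (h2 : pertLev C rlev η A σ' = rlev σ' + d) :
    pertSlt C rlev rslt η A σ σ' ↔ rslt σ σ' := by
  constructor
  · rintro (h | ⟨h, h'⟩)
    · rw [h1, h2] at h
      have hlt : rlev σ < rlev σ' := by linarith
      have hne : σ ≠ σ' := by rintro rfl; exact lt_irrefl _ hlt
      rcases hr.2.2.2.1 σ hσ σ' hσ' hne with h' | h'
      · exact h'
      · exact absurd (hr.2.2.2.2.1 σ' hσ' σ hσ h') (not_le.2 hlt)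
    · exact h'
  · intro h
    have hle : rlev σ ≤ rlev σ' := hr.2.2.2.2.1 σ hσ σ' hσ' h
    rw [pertSlt, h1, h2]
    rcases hle.lt_or_eq with h' | h'
    · exact Or.inl (by linarith)
    · exact Or.inr ⟨by linarith, h⟩

end PertLemmas




/-- Case 2 of the proof of Claim 3.5: if there is a path `T` in
`G(≻_r τ₀)` from the component of `ω̃` in `G(≻_r τ̃)` to `ω_e` avoiding
`K_V(G(≻_r τ̃), ω₀)`, then the perturbed order `s = q(r, η, A)` lies in `R_ε`,
`(τ̃, ω₀)` is a persistence pair of `s`, and its optimal volume avoids `ω̃`. -/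
theorem case_two_of_claim
    (hn : 2 ≤ n) (C : NComplex V n) (htwo : TwoCofaces C) (hconn : DualConn C)
    (rlev : Finset V → ℝ) (rslt : Finset V → Finset V → Prop)
    (hr : IsOWL C rlev rslt)
    (τ₀ ω₀ : Finset V) (hpair : IsPersPair C rslt τ₀ ω₀)
    (ε : ℝ) (hε : 0 < ε)
    (ωt : Finset V) (hωtX : ωt ∈ C.X) (hωtc : ωt.card = n + 1)
    (hOV : (some ωt : Cell V) ∈ OV C rslt ω₀)
    (hSV : (some ωt : Cell V) ∉ SV C rlev τ₀ ω₀ ε)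
    (τt : Finset V) (hτtX : τt ∈ C.X) (hτtc : τt.card = n)
    (hτt₁ : rslt τ₀ τt) (hτt₂ : rlev τ₀ ≤ rlev τt) (hτt₃ : rlev τt < rlev τ₀ + ε)
    (hτt₄ : (some ωt : Cell V) ∉ KV C (Egt C rslt τt) (some ω₀))
    (hτt₅ : (some ωt : Cell V) ∈ KV C (Ege C rslt τt) (some ω₀))
    (ωe ωe' : Cell V) (hfe : faceCell C τ₀ ωe) (hfe' : faceCell C τ₀ ωe')
    (hee : ωe ≠ ωe') (hin : ωe ∈ KV C (Egt C rslt τ₀) (some ω₀))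
    (ω₁ : Cell V) (hω₁ : IsMaxCell rslt (KV C (Egt C rslt τ₀) ωe') ω₁)
    (cstart : Cell V) (hcst : cstart ∈ KV C (Egt C rslt τt) (some ωt))
    (vs : List (Cell V)) (es : List (Finset V))
    (hT : IsPath C (Egt C rslt τ₀) cstart ωe vs es) (hnd : vs.Nodup)
    (havoid : ∀ c ∈ vs, c ∉ KV C (Egt C rslt τt) (some ω₀)) :
    ∀ η : ℝ, η = (rlev τt - rlev τ₀ + ε) / 4 →
      ∀ A : Set (Finset V),
        A = compEdges C (Egt C rslt τt) (some ωt) ∪ {τ | τ ∈ es} ∪ {τ₀} ∪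
          compEdges C (Egt C rslt τ₀) ω₁ →
        InR C rlev rslt ω₀ ε (pertLev C rlev η A) (pertSlt C rlev rslt η A) ∧
        IsPersPair C (pertSlt C rlev rslt η A) τt ω₀ ∧
        (∀ τ : Finset V,
          IsPersPair C (pertSlt C rlev rslt η A) τ ω₀ → τ = τt) ∧
        (some ωt : Cell V) ∉ OV C (pertSlt C rlev rslt η A) ω₀ := by
  intro η hηdef A hAdef
  have hpair' := hpair
  obtain ⟨hτ₀X, hτ₀c, hω₀X, hω₀c, c₁, c₂, hne12, hf1, hf2, hsep, m₂r, hmax1, hmax2, hltr⟩ :=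
    hpair
  have hηpos : 0 < η := by rw [hηdef]; linarith
  -- basic facts about A
  have hτ₀E : ∀ τ ∈ es, τ ∈ Egt C rslt τ₀ := hT.edges_mem
  have hAcard : ∀ τ ∈ A, τ ∈ C.X ∧ τ.card = n := by
    intro τ hτ
    rw [hAdef] at hτ
    rcases hτ with ((hτ | hτ) | hτ) | hτ
    · exact ⟨hτ.1.1, hτ.1.2.1⟩
    · exact ⟨(hτ₀E τ hτ).1, (hτ₀E τ hτ).2.1⟩
    · rw [Set.mem_singleton_iff] at hτ; exact hτ ▸ ⟨hτ₀X, hτ₀c⟩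
    · exact ⟨hτ.1.1, hτ.1.2.1⟩
  have hAlev : ∀ τ ∈ A, rlev τ₀ ≤ rlev τ := by
    intro τ hτ
    rw [hAdef] at hτ
    rcases hτ with ((hτ | hτ) | hτ) | hτ
    · exact le_trans (hr.2.2.2.2.1 τ₀ hτ₀X τt hτtX hτt₁)
        (hr.2.2.2.2.1 τt hτtX τ hτ.1.1 hτ.1.2.2)
    · exact hr.2.2.2.2.1 τ₀ hτ₀X τ (hτ₀E τ hτ).1 (hτ₀E τ hτ).2.2
    · rw [Set.mem_singleton_iff] at hτ; exact hτ ▸ le_refl _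
    · exact hr.2.2.2.2.1 τ₀ hτ₀X τ hτ.1.1 hτ.1.2.2
  have hsOWL : IsOWL C (pertLev C rlev η A) (pertSlt C rlev rslt η A) :=
    pert_isOWL hr hηpos hAcard
  -- identify ωe = c₁, ωe' = c₂
  have hKV₀ : KV C (Egt C rslt τ₀) (some ω₀) = KV C (Egt C rslt τ₀) c₁ :=
    KV_congr hmax1.1
  have hωe_c₁ : ωe ∈ KV C (Egt C rslt τ₀) c₁ := hKV₀ ▸ hin
  obtain ⟨e₁, e₂, he12, hfaces₀⟩ := htwo τ₀ hτ₀X hτ₀c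
  have hωec₂ : ωe ≠ c₂ := fun h => hsep (h ▸ hωe_c₁)
  have hωe : ωe = c₁ := by
    rcases (hfaces₀ ωe).1 hfe with rfl | rfl <;>
      rcases (hfaces₀ c₁).1 hf1 with h1 | h1 <;>
      rcases (hfaces₀ c₂).1 hf2 with h2 | h2 <;> simp_all
  have hωe' : ωe' = c₂ := by
    rcases (hfaces₀ ωe').1 hfe' with rfl | rfl <;>
      rcases (hfaces₀ c₁).1 hf1 with h1 | h1 <;>
      rcases (hfaces₀ c₂).1 hf2 with h2 | h2 <;> simp_all
  subst hωe hωe'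
  have hfab₀ : ∀ c : Cell V, faceCell C τ₀ c ↔ (c = ωe ∨ c = ωe') := by
    intro c
    rcases (hfaces₀ ωe).1 hfe with h1 | h1 <;> rcases (hfaces₀ ωe').1 hfe' with h2 | h2
    · exact absurd (h1.trans h2.symm) hee
    · rw [hfaces₀ c, ← h1, ← h2]
    · rw [hfaces₀ c, ← h1, ← h2, or_comm]
    · exact absurd (h1.trans h2.symm) hee
  -- ω₁ coincides with m₂r
  have hω₁m : ω₁ = m₂r :=
    maxCell_unique hr (fun c hc => isCell_of_mem_KV (isCell_of_faceCell hfe') hc) hω₁ hmax2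
  have hltω₁ : cslt rslt (some ω₀) ω₁ := hω₁m ▸ hltr
  -- ωt lies in the component of ω₀ in G(≻_r τ₀)
  have hωtcomp : (some ωt : Cell V) ∈ KV C (Egt C rslt τ₀) (some ω₀) := by
    obtain ⟨τ, hτpair, hτKV⟩ := hOV
    rwa [persPair_unique hr hτpair hpair'] at hτKV
  -- splitting at τt
  have hEge : Ege C rslt τt = Egt C rslt τt ∪ {τt} := by
    ext τ
    simp only [Ege, Egt, Set.mem_setOf_eq, Set.mem_union, Set.mem_singleton_iff]
    constructor
    · rintro ⟨h1, h2, h3 | h3⟩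
      · exact Or.inr h3
      · exact Or.inl ⟨h1, h2, h3⟩
    · rintro (⟨h1, h2, h3⟩ | rfl)
      · exact ⟨h1, h2, Or.inr h3⟩
      · exact ⟨hτtX, hτtc, Or.inl rfl⟩
  obtain ⟨d₁, d₂, hd12, hfacest⟩ := htwo τt hτtX hτtc
  rw [hEge] at hτt₅
  have hd_or : d₁ ∈ KV C (Egt C rslt τt) (some ω₀) ∨
      d₂ ∈ KV C (Egt C rslt τt) (some ω₀) := by
    by_contra h
    push_neg at h
    exact hτt₄ (KV_union_single_eq hfacest h.1 h.2 hτt₅)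
  have hsplit := KV_union_single_subset hfacest (some ω₀) hτt₅
  obtain ⟨a, b, hfab, ha, hb, hbn⟩ :
      ∃ a b : Cell V, (∀ c : Cell V, faceCell C τt c ↔ (c = a ∨ c = b)) ∧
        a ∈ KV C (Egt C rslt τt) (some ω₀) ∧
        (some ωt : Cell V) ∈ KV C (Egt C rslt τt) b ∧
        b ∉ KV C (Egt C rslt τt) (some ω₀) := by
    rcases hsplit with (h | h) | h
    · exact absurd h hτt₄
    · refine ⟨d₂, d₁, fun c => (hfacest c).trans or_comm, ?_, mem_KV_symm (mem_KV_symm h), ?_⟩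
      · rcases hd_or with h' | h'
        · exact absurd (mem_KV_trans h' (mem_KV_symm (mem_KV_symm h))) hτt₄
        · exact h'
      · intro h'
        exact hτt₄ (mem_KV_trans h' (mem_KV_symm (mem_KV_symm h)))
    · refine ⟨d₁, d₂, hfacest, ?_, mem_KV_symm (mem_KV_symm h), ?_⟩
      · rcases hd_or with h' | h'
        · exact h'
        · exact absurd (mem_KV_trans h' (mem_KV_symm (mem_KV_symm h))) hτt₄
      · intro h'
        exact hτt₄ (mem_KV_trans h' (mem_KV_symm (mem_KV_symm h)))
  have hab : a ≠ b := fun h => hbn (h ▸ ha)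
  -- cells
  have hω₀cell : IsCell C (some ω₀ : Cell V) := ⟨hω₀X, hω₀c⟩
  have hacell : IsCell C a := isCell_of_faceCell ((hfab a).2 (Or.inl rfl))
  have hbcell : IsCell C b := isCell_of_faceCell ((hfab b).2 (Or.inr rfl))
  have hEgt_sub : Egt C rslt τt ⊆ Egt C rslt τ₀ := Egt_subset hr hτ₀X hτtX hτt₁
  -- S: the component of ω₀ in G(≻_r τt), contained in the component of ωe
  have hSsub : KV C (Egt C rslt τt) (some ω₀) ⊆ KV C (Egt C rslt τ₀) ωe :=
    fun c hc => hKV₀ ▸ KV_mono hEgt_sub hc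
  -- b lies in the component of ωe in G(≻_r τ₀)
  have hbc₁ : b ∈ KV C (Egt C rslt τ₀) ωe := by
    have h1 : b ∈ KV C (Egt C rslt τ₀) (some ωt) := KV_mono hEgt_sub (mem_KV_symm hb)
    exact mem_KV_trans (hKV₀ ▸ hωtcomp) h1
  -- the component of ω₁ in G(≻_r τ₀) equals the component of ωe'
  have hω₁KV : KV C (Egt C rslt τ₀) ω₁ = KV C (Egt C rslt τ₀) ωe' := KV_congr hω₁.1
  have hdisj : ∀ c : Cell V, c ∈ KV C (Egt C rslt τ₀) ωe →
      c ∈ KV C (Egt C rslt τ₀) ωe' → False := by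
    intro c h1 h2
    exact hsep (mem_KV_trans h1 (mem_KV_symm h2))
  -- τt is not in A
  have hτtA : τt ∉ A := by
    intro h
    rw [hAdef] at h
    rcases h with ((h | h) | h) | h
    · exact hr.2.1 τt hτtX h.1.2.2
    · have := hT.coface_mem_vs htwo (fun τ hτ => ⟨hτ.1, hτ.2.1⟩) τt h a
        ((hfab a).2 (Or.inl rfl))
      exact havoid a this ha
    · rw [Set.mem_singleton_iff] at h
      exact hr.2.1 τ₀ hτ₀X (h ▸ hτt₁)
    · obtain ⟨hτE, c, hfc, hcKV⟩ := h
      rw [hω₁KV] at hcKV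
      rcases (hfab c).1 hfc with rfl | rfl
      · exact hdisj c (hSsub ha) hcKV
      · exact hdisj c hbc₁ hcKV
  have hτtLev : pertLev C rlev η A τt = rlev τt - η :=
    pertLev_low (by omega) hτtA
  -- A is contained in the new edge set
  have hAsub : A ⊆ Egt C (pertSlt C rlev rslt η A) τt := by
    intro τ hτ
    refine ⟨(hAcard τ hτ).1, (hAcard τ hτ).2, Or.inl ?_⟩
    rw [hτtLev, pertLev_A hτ]
    have := hAlev τ hτ
    rw [hηdef]
    linarith
  -- the new edge set is the old one plus A
  have hEgtEq : Egt C (pertSlt C rlev rslt η A) τt = Egt C rslt τt ∪ A := by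
    apply Set.Subset.antisymm
    · rintro τ ⟨hX, hc, hlt⟩
      by_cases hτA : τ ∈ A
      · exact Or.inr hτA
      · refine Or.inl ⟨hX, hc, ?_⟩
        rw [← pertSlt_iff_of_offset hr hτtX hX (-η) (by rw [hτtLev]; ring)
          (by rw [pertLev_low (by omega) hτA]; ring)]
        exact hlt
    · rintro τ (hτ | hτ)
      · by_cases hτA : τ ∈ A
        · exact hAsub hτA
        · refine ⟨hτ.1, hτ.2.1, ?_⟩
          rw [pertSlt_iff_of_offset hr hτtX hτ.1 (-η) (by rw [hτtLev]; ring)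
            (by rw [pertLev_low (by have := hτ.2.1; omega) hτA]; ring)]
          exact hτ.2.2
      · exact hAsub hτ
  -- the component of ω₀ does not change
  have hEsub2 : Egt C rslt τt ⊆ Egt C (pertSlt C rlev rslt η A) τt :=
    hEgtEq ▸ Set.subset_union_left
  have hScomp : KV C (Egt C (pertSlt C rlev rslt η A) τt) (some ω₀) =
      KV C (Egt C rslt τt) (some ω₀) := by
    apply Set.Subset.antisymm
    · refine KV_subset_of_closed (KV_refl _) ?_
      rintro c hc c' ⟨τ, hτ, h1, h2, h3⟩
      rw [hEgtEq] at hτ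
      rcases hτ with hτ | hτ
      · exact Relation.ReflTransGen.tail hc ⟨τ, hτ, h1, h2, h3⟩
      · rw [hAdef] at hτ
        rcases hτ with ((hτ | hτ) | hτ) | hτ
        · exact Relation.ReflTransGen.tail hc ⟨τ, hτ.1, h1, h2, h3⟩
        · have := hT.coface_mem_vs htwo (fun τ' hτ' => ⟨hτ'.1, hτ'.2.1⟩) τ hτ c h1
          exact absurd hc (havoid c this)
        · rw [Set.mem_singleton_iff] at hτ
          subst hτ
          rcases (hfab₀ c).1 h1 with rfl | rfl
          · exact absurd hc (havoid c hT.end_mem)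
          · exact absurd (hSsub hc) (fun h => hdisj c h (KV_refl _))
        · obtain ⟨hτE, d, hfd, hdKV⟩ := hτ
          rw [hω₁KV] at hdKV
          exfalso
          rcases eq_or_ne c d with rfl | hcd
          · exact hdisj c (hSsub hc) hdKV
          · have : c ∈ KV C (Egt C rslt τ₀) d :=
              Relation.ReflTransGen.single ⟨τ, hτE, hfd, h1, hcd.symm⟩
            exact hdisj c (hSsub hc) (mem_KV_trans hdKV this)
    · exact KV_mono hEsub2
  -- maximality of ω₀ in its new component
  have hmaxS : IsMaxCell (pertSlt C rlev rslt η A) (KV C (Egt C rslt τt) (some ω₀))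
      (some ω₀) := by
    refine ⟨KV_refl _, ?_⟩
    intro c hcS hne
    have hcc₁ : c ∈ KV C (Egt C rslt τ₀) ωe := hSsub hcS
    cases c with
    | none => exact (hmax1.2 none hcc₁ hne).elim
    | some w =>
      have hw : rslt w ω₀ := hmax1.2 (some w) hcc₁ hne
      have hwcell : IsCell C (some w : Cell V) := isCell_of_mem_KV hω₀cell hcS
      show pertSlt C rlev rslt η A w ω₀
      rw [pertSlt_iff_of_offset hr hwcell.1 hω₀X η (pertLev_top hwcell.1 hwcell.2)
        (pertLev_top hω₀X hω₀c)]
      exact hw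
  -- ω₁ lies in the component of b in the new graph
  have hes_A : ∀ τ ∈ es, τ ∈ A := by
    intro τ hτ
    rw [hAdef]
    exact Or.inl (Or.inl (Or.inr hτ))
  have hτ₀A : τ₀ ∈ A := by
    rw [hAdef]
    exact Or.inl (Or.inr rfl)
  have hb_t : (some ωt : Cell V) ∈ KV C (Egt C (pertSlt C rlev rslt η A) τt) b :=
    KV_mono hEsub2 hb
  have hcst' : cstart ∈ KV C (Egt C (pertSlt C rlev rslt η A) τt) (some ωt) :=
    KV_mono hEsub2 hcst
  have hT' : ωe ∈ KV C (Egt C (pertSlt C rlev rslt η A) τt) cstart :=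
    hT.toKV (fun τ hτ => hAsub (hes_A τ hτ))
  have hee2 : ωe' ∈ KV C (Egt C (pertSlt C rlev rslt η A) τt) ωe :=
    Relation.ReflTransGen.single ⟨τ₀, hAsub hτ₀A, hfe, hfe', hee⟩
  have hcompEq : compEdges C (Egt C rslt τ₀) ωe' = compEdges C (Egt C rslt τ₀) ω₁ := by
    unfold compEdges
    rw [hω₁KV]
  have hcompA : compEdges C (Egt C rslt τ₀) ω₁ ⊆ A := by
    rw [hAdef]
    exact fun τ hτ => Or.inr hτ
  have hω₁s : ω₁ ∈ KV C (Egt C (pertSlt C rlev rslt η A) τt) ωe' := by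
    have h0 : ω₁ ∈ KV C (compEdges C (Egt C rslt τ₀) ωe') ωe' := mem_KV_compEdges hω₁.1
    rw [hcompEq] at h0
    exact KV_mono (fun τ hτ => hAsub (hcompA hτ)) h0
  have hω₁b : ω₁ ∈ KV C (Egt C (pertSlt C rlev rslt η A) τt) b :=
    mem_KV_trans (mem_KV_trans (mem_KV_trans (mem_KV_trans hb_t hcst') hT') hee2) hω₁s
  -- the maximum of the b-component
  have hbKVcell : ∀ c ∈ KV C (Egt C (pertSlt C rlev rslt η A) τt) b, IsCell C c :=
    fun c hc => isCell_of_mem_KV hbcell hc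
  obtain ⟨m₂s, hm₂s⟩ := exists_maxCell hsOWL (KV_finite b) ⟨b, KV_refl b⟩ hbKVcell
  have hω₀ω₁ : cslt (pertSlt C rlev rslt η A) (some ω₀) ω₁ := by
    cases ω₁ with
    | none => trivial
    | some w =>
      have hwcell : IsCell C (some w : Cell V) :=
        isCell_of_mem_KV (isCell_of_faceCell hfe') hω₁.1
      show pertSlt C rlev rslt η A ω₀ w
      rw [pertSlt_iff_of_offset hr hω₀X hwcell.1 η (pertLev_top hω₀X hω₀c)
        (pertLev_top hwcell.1 hwcell.2)]
      exact hltω₁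
  have hω₀m₂ : cslt (pertSlt C rlev rslt η A) (some ω₀) m₂s := by
    rcases eq_or_ne ω₁ m₂s with rfl | hnem
    · exact hω₀ω₁
    · exact cslt_trans hsOWL hω₀cell (hbKVcell ω₁ hω₁b) (hbKVcell m₂s hm₂s.1) hω₀ω₁
        (hm₂s.2 ω₁ hω₁b hnem)
  -- assemble the persistence pair
  have haKV : a ∈ KV C (Egt C (pertSlt C rlev rslt η A) τt) (some ω₀) := KV_mono hEsub2 ha
  have hKVa : KV C (Egt C (pertSlt C rlev rslt η A) τt) a =
      KV C (Egt C (pertSlt C rlev rslt η A) τt) (some ω₀) := KV_congr haKV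
  have hPairS : IsPersPair C (pertSlt C rlev rslt η A) τt ω₀ := by
    refine ⟨hτtX, hτtc, hω₀X, hω₀c, a, b, hab, (hfab a).2 (Or.inl rfl),
      (hfab b).2 (Or.inr rfl), ?_, m₂s, ?_, hm₂s, hω₀m₂⟩
    · rw [hKVa, hScomp]
      exact hbn
    · rw [hKVa, hScomp]
      exact hmaxS
  -- the order lies in R_ε
  have hInR : InR C rlev rslt ω₀ ε (pertLev C rlev η A) (pertSlt C rlev rslt η A) := by
    refine ⟨hsOWL, ?_, ?_⟩
    · intro σ hσ
      have habs : |pertLev C rlev η A σ - rlev σ| = η := by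
        unfold pertLev
        split
        · rw [show rlev σ + η - rlev σ = η by ring, abs_of_nonneg hηpos.le]
        · rw [show rlev σ - η - rlev σ = -η by ring, abs_neg, abs_of_nonneg hηpos.le]
      rw [habs, hηdef]
      linarith
    · intro σ hσ hlt
      have h1 : pertLev C rlev η A σ ≤ rlev σ + η := pertLev_le hηpos.le σ
      have h2 : rlev σ ≤ rlev ω₀ := hr.2.2.2.2.1 σ hσ ω₀ hω₀X hlt
      have h3 : pertLev C rlev η A ω₀ = rlev ω₀ + η := pertLev_top hω₀X hω₀c
      have h4 : pertLev C rlev η A σ ≤ pertLev C rlev η A ω₀ := by rw [h3]; linarith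
      rcases h4.lt_or_eq with h | h
      · exact Or.inl h
      · exact Or.inr ⟨h, hlt⟩
  refine ⟨hInR, hPairS, fun τ hτ => persPair_unique hsOWL hτ hPairS, ?_⟩
  rintro ⟨τ, hp, hKVt⟩
  rw [persPair_unique hsOWL hp hPairS] at hKVt
  rw [hScomp] at hKVt
  exact hτt₄ hKVt

end StableVol
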